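/- Let H be a complex Hilbert space and let A and B be bounded self-adjoint operators on H; for s ∈ ℝ write cos(sA) := (exp(isA) + exp(-isA))/2 and cos(sB) := (exp(isB) + exp(-isB))/2, where exp denotes the exponential in the Banach algebra of bounded operators on H, and S_B(t) := ∫₀ᵗ cos(τB) dτ (Bochner integral). Then for every s ∈ ℝ, cos(sA) − cos(sB) = ∫₀ˢ S_B(s−r) ∘ (B² − A²) ∘ cos(rA) dr, the integral being a Bochner integral in the Banach algebra of bounded operators. -/

import Mathlib

open MeasureTheory Filter Topology intervalIntegral

/-- The operator cosine family `cos (s A) = (exp (i s A) + exp (-i s A)) / 2` of a bounded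
operator `A` on a complex Hilbert space. -/
noncomputable def opCos {H : Type*} [NormedAddCommGroup H] [InnerProductSpace ℂ H]
    [CompleteSpace H] (A : H →L[ℂ] H) (s : ℝ) : H →L[ℂ] H :=
  (2 : ℂ)⁻¹ • (NormedSpace.exp (((s : ℂ) * Complex.I) • A) +
    NormedSpace.exp ((-(s : ℂ) * Complex.I) • A))

/-- The operator sine family `S_B (t) = ∫₀ᵗ cos (τ B) dτ` of a bounded operator `B` on a
complex Hilbert space. -/
noncomputable def opSin {H : Type*} [NormedAddCommGroup H] [InnerProductSpace ℂ H]
    [CompleteSpace H] (B : H →L[ℂ] H) (t : ℝ) : H →L[ℂ] H :=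
  ∫ τ in (0 : ℝ)..t, opCos B τ

section Aux

set_option linter.unusedSectionVars false

variable {𝔸 : Type*} [NormedRing 𝔸] [NormedAlgebra ℂ 𝔸] [CompleteSpace 𝔸]

noncomputable def myE (x : 𝔸) (r : ℝ) : 𝔸 := NormedSpace.exp ((r : ℂ) • x)

lemma hasDerivAt_myE (x : 𝔸) (r : ℝ) : HasDerivAt (myE x) (myE x r * x) r := by
  have h1 : HasDerivAt (fun u : ℂ => NormedSpace.exp (u • x))
      (NormedSpace.exp ((r : ℂ) • x) * x) ((r : ℝ) : ℂ) :=
    hasDerivAt_exp_smul_const x ((r : ℂ))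
  have h2 : HasDerivAt (fun r : ℝ => (r : ℂ)) 1 r := by
    simpa using (hasDerivAt_id r).ofReal_comp
  have h3 := h1.scomp r h2
  simp only [one_smul] at h3
  exact h3

lemma myE_zero (x : 𝔸) : myE x 0 = 1 := by simp [myE, NormedSpace.exp_zero]

/-- generic cosine -/
noncomputable def myC (a : 𝔸) (s : ℝ) : 𝔸 :=
  (2 : ℂ)⁻¹ • (myE (Complex.I • a) s + myE (-(Complex.I • a)) s)

/-- derivative of the cosine -/
noncomputable def myD (a : 𝔸) (s : ℝ) : 𝔸 :=
  (2 : ℂ)⁻¹ • (myE (Complex.I • a) s * (Complex.I • a) +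
    myE (-(Complex.I • a)) s * (-(Complex.I • a)))

/-- generic sine -/
noncomputable def myS (a : 𝔸) (t : ℝ) : 𝔸 := ∫ τ in (0 : ℝ)..t, myC a τ

lemma myC_zero (a : 𝔸) : myC a 0 = 1 := by
  rw [myC, myE_zero, myE_zero, ← two_smul ℂ (1 : 𝔸), smul_smul]
  norm_num

lemma myD_zero (a : 𝔸) : myD a 0 = 0 := by
  rw [myD, myE_zero, myE_zero, one_mul, one_mul, add_neg_cancel, smul_zero]

lemma hasDerivAt_myC (a : 𝔸) (s : ℝ) : HasDerivAt (myC a) (myD a s) s := by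
  exact ((hasDerivAt_myE (Complex.I • a) s).add (hasDerivAt_myE (-(Complex.I • a)) s)).const_smul ((2 : ℂ)⁻¹)

lemma continuous_myC (a : 𝔸) : Continuous (myC a) :=
  continuous_iff_continuousAt.2 fun s => (hasDerivAt_myC a s).continuousAt

lemma continuous_myD (a : 𝔸) : Continuous (myD a) := by
  have h : ∀ x : 𝔸, Continuous (fun s => myE x s) := by
    intro x
    exact continuous_iff_continuousAt.2 fun s => (hasDerivAt_myE x s).continuousAt
  exact (((h _).mul continuous_const).add ((h _).mul continuous_const)).const_smul _

lemma hasDerivAt_myD (a : 𝔸) (s : ℝ) : HasDerivAt (myD a) (-(myC a s * (a * a))) s := by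
  have h1 := (hasDerivAt_myE (Complex.I • a) s).mul_const (Complex.I • a)
  have h2 := (hasDerivAt_myE (-(Complex.I • a)) s).mul_const (-(Complex.I • a))
  have h := (h1.add h2).const_smul ((2 : ℂ)⁻¹)
  have key : (2 : ℂ)⁻¹ • (myE (Complex.I • a) s * (Complex.I • a) * (Complex.I • a) +
      myE (-(Complex.I • a)) s * -(Complex.I • a) * -(Complex.I • a))
      = -(myC a s * (a * a)) := by
    have hx : (Complex.I • a) * (Complex.I • a) = -(a * a) := by
      rw [smul_mul_smul_comm, Complex.I_mul_I, neg_one_smul]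
    rw [mul_assoc, mul_assoc, neg_mul_neg, hx, mul_neg, mul_neg, ← neg_add, smul_neg,
      ← add_mul, ← smul_mul_assoc, myC]
  rw [← key]
  exact h

lemma myS_zero (a : 𝔸) : myS a 0 = 0 := by simp [myS]

lemma hasDerivAt_myS (a : 𝔸) (t : ℝ) : HasDerivAt (myS a) (myC a t) t := by
  refine intervalIntegral.integral_hasDerivAt_right
    ((continuous_myC a).intervalIntegrable 0 t)
    ((continuous_myC a).stronglyMeasurable.stronglyMeasurableAtFilter)
    (continuous_myC a).continuousAt

lemma continuous_myS (a : 𝔸) : Continuous (myS a) :=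
  continuous_iff_continuousAt.2 fun s => (hasDerivAt_myS a s).continuousAt

lemma myS_mul_sq (a : 𝔸) (t : ℝ) : myS a t * (a * a) = -(myD a t) := by
  have hftc : ∫ τ in (0:ℝ)..t, -(myC a τ * (a * a)) = myD a t - myD a 0 :=
    intervalIntegral.integral_eq_sub_of_hasDerivAt (fun τ _ => hasDerivAt_myD a τ)
      (((continuous_myC a).mul continuous_const).neg.intervalIntegrable 0 t)
  rw [myD_zero, sub_zero] at hftc
  have hL : ∫ τ in (0:ℝ)..t, myC a τ * (a * a) = myS a t * (a * a) := by
    have := (ContinuousLinearMap.mul ℂ 𝔸).flip (a * a) |>.intervalIntegral_comp_comm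
      ((continuous_myC a).intervalIntegrable (μ := volume) 0 t)
    simpa [myS] using this
  rw [intervalIntegral.integral_neg, hL] at hftc
  exact neg_eq_iff_eq_neg.mp hftc

lemma commute_myC (a : 𝔸) (r : ℝ) : Commute (a * a) (myC a r) := by
  have h1 : Commute (a * a) (Complex.I • a) :=
    ((Commute.refl a).mul_left (Commute.refl a)).smul_right _
  have h2 : Commute (a * a) (myE (Complex.I • a) r) := (h1.smul_right _).exp_right
  have h3 : Commute (a * a) (myE (-(Complex.I • a)) r) := (h1.neg_right.smul_right _).exp_right
  exact ((h2.add_right h3).smul_right _)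

end Aux

section Main

variable {H : Type*} [NormedAddCommGroup H] [InnerProductSpace ℂ H] [CompleteSpace H]

lemma opCos_eq (A : H →L[ℂ] H) (s : ℝ) : opCos A s = myC A s := by
  rw [opCos, myC, myE, myE, smul_smul, smul_neg, ← neg_smul, smul_smul, neg_mul]

lemma opSin_eq (B : H →L[ℂ] H) (t : ℝ) : opSin B t = myS B t := by
  simp only [opSin, myS, opCos_eq]

theorem stmt8_aux (A B : H →L[ℂ] H) :
    ∀ s : ℝ, opCos A s - opCos B s =
      ∫ r in (0 : ℝ)..s, opSin B (s - r) * (B ^ 2 - A ^ 2) * opCos A r := by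
  intro s
  have hSr : ∀ r : ℝ, HasDerivAt (fun r => myS B (s - r)) (-(myC B (s - r))) r := by
    intro r
    have hh : HasDerivAt (fun r : ℝ => s - r) (-1) r := (hasDerivAt_id r).const_sub s
    simpa [Function.comp_def] using (hasDerivAt_myS B (s - r)).scomp r hh
  have hCr : ∀ r : ℝ, HasDerivAt (fun r => myC B (s - r)) (-(myD B (s - r))) r := by
    intro r
    have hh : HasDerivAt (fun r : ℝ => s - r) (-1) r := (hasDerivAt_id r).const_sub s
    simpa [Function.comp_def] using (hasDerivAt_myC B (s - r)).scomp r hh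
  set F : ℝ → (H →L[ℂ] H) :=
    fun r => myS B (s - r) * myD A r + myC B (s - r) * myC A r with hFdef
  have hF : ∀ r : ℝ, HasDerivAt F (myS B (s - r) * (B * B - A * A) * myC A r) r := by
    intro r
    have h := ((hSr r).mul (hasDerivAt_myD A r)).add ((hCr r).mul (hasDerivAt_myC A r))
    have heq : -(myC B (s - r)) * myD A r + myS B (s - r) * -(myC A r * (A * A)) +
        (-(myD B (s - r)) * myC A r + myC B (s - r) * myD A r)
        = myS B (s - r) * (B * B - A * A) * myC A r := by
      rw [(myS_mul_sq B (s - r)).symm, ← (commute_myC A r).eq]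
      noncomm_ring
    rw [heq] at h
    exact h
  have hcont : Continuous (fun r => myS B (s - r) * (B * B - A * A) * myC A r) :=
    (((continuous_myS B).comp (continuous_const.sub continuous_id)).mul
      continuous_const).mul (continuous_myC A)
  have hftc : ∫ r in (0:ℝ)..s, myS B (s - r) * (B * B - A * A) * myC A r = F s - F 0 :=
    intervalIntegral.integral_eq_sub_of_hasDerivAt (fun r _ => hF r)
      (hcont.intervalIntegrable 0 s)
  have hFs : F s = myC A s := by
    simp [hFdef, myS_zero, myC_zero]
  have hF0 : F 0 = myC B s := by
    simp [hFdef, myD_zero, myC_zero]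
  simp only [opCos_eq, opSin_eq, pow_two]
  rw [hftc, hFs, hF0]

end Main

/-- **Duhamel identity for the difference of two cosine families.** For bounded
self-adjoint operators `A`, `B` on a complex Hilbert space,
`cos (s A) - cos (s B) = ∫₀ˢ S_B (s - r) ∘ (B² - A²) ∘ cos (r A) dr`. -/
theorem stmt8 {H : Type*} [NormedAddCommGroup H] [InnerProductSpace ℂ H] [CompleteSpace H]
    (A B : H →L[ℂ] H) (hA : IsSelfAdjoint A) (hB : IsSelfAdjoint B) :
    ∀ s : ℝ, opCos A s - opCos B s =
      ∫ r in (0 : ℝ)..s, opSin B (s - r) * (B ^ 2 - A ^ 2) * opCos A r := by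
  exact stmt8_aux A B
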